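/- There exists a constant C > 0 such that for every n ≥ 2, Σ_{t : n(t) = n} w(t)·log(1 + 1/c(t)) ≤ C·(9/10)^n, where the sum ranges over all plane binary trees t with n leaves. In other words, the Yule–Harding mean of the toll function log(1 + 1/c_r) converges to 0 exponentially fast, at rate O(0.9^n). -/

import Mathlib

/-- Plane binary trees: a leaf, or an ordered pair of plane binary trees. -/
inductive PTree : Type where
  | leaf : PTree
  | node : PTree → PTree → PTree
deriving DecidableEq

namespace PTree

/-- Number of leaves of a plane binary tree. -/
def leaves : PTree → ℕ
  | leaf => 1
  | node l r => leaves l + leaves r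

/-- Number of root ancestral configurations:
`c(leaf) = 0`, `c(node l r) = (c l + 1) * (c r + 1)`. -/
def c : PTree → ℕ
  | leaf => 0
  | node l r => (c l + 1) * (c r + 1)

/-- The finite set of plane binary trees with `n` leaves. -/
def trees : ℕ → Finset PTree
  | 0 => ∅
  | 1 => {leaf}
  | (n+2) =>
      (Finset.Icc 1 (n+1)).attach.biUnion fun j =>
        ((trees j.1) ×ˢ (trees (n+2-j.1))).image fun p => node p.1 p.2
decreasing_by
  · have h := Finset.mem_Icc.mp j.2; omega
  · have h := Finset.mem_Icc.mp j.2; omega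

end PTree

namespace PTree

/-- Yule–Harding weight: `w(leaf) = 1`,
`w(node l r) = w l * w r / (leaves l + leaves r - 1)`. -/
def w : PTree → ℚ
  | leaf => 1
  | node l r => w l * w r / ((leaves l + leaves r - 1 : ℕ) : ℚ)

end PTree

namespace PTree
lemma leaves_of_mem : ∀ n, ∀ t ∈ trees n, leaves t = n := by
  intro n
  induction n using Nat.strong_induction_on with
  | _ n ih =>
    match n with
    | 0 => intro t ht; simp [trees] at ht
    | 1 => intro t ht; simp [trees] at ht; subst ht; rfl
    | (m+2) =>
      intro t ht
      rw [trees] at ht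
      simp only [Finset.mem_biUnion, Finset.mem_image, Finset.mem_product,
        Finset.mem_attach, true_and] at ht
      obtain ⟨j, p, ⟨hp1, hp2⟩, rfl⟩ := ht
      have hj := Finset.mem_Icc.mp j.2
      have h1 := ih j.1 (by omega) p.1 hp1
      have h2 := ih (m+2-j.1) (by omega) p.2 hp2
      simp only [leaves, h1, h2]; omega
end PTree
namespace PTree
lemma sum_trees (F : PTree → ℚ) (m : ℕ) :
    ∑ t ∈ trees (m+2), F t
      = ∑ j ∈ Finset.Icc 1 (m+1), ∑ l ∈ trees j, ∑ r ∈ trees (m+2-j), F (node l r) := by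
  rw [trees]
  rw [Finset.sum_biUnion]
  · rw [← Finset.sum_attach (Finset.Icc 1 (m+1))
      (fun j => ∑ l ∈ trees j, ∑ r ∈ trees (m+2-j), F (node l r))]
    refine Finset.sum_congr rfl fun j _ => ?_
    rw [Finset.sum_image (by intro p _ q _ h; cases p; cases q; injection h with h1 h2; simp_all)]
    rw [Finset.sum_product]
  · intro x _ y _ hxy
    simp only [Finset.disjoint_left]
    intro t htx hty
    simp only [Finset.mem_image, Finset.mem_product] at htx hty
    obtain ⟨p, ⟨hp1, _⟩, rfl⟩ := htx
    obtain ⟨q, ⟨hq1, _⟩, h⟩ := hty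
    injection h with h1 h2
    rw [h1] at hq1
    exact hxy (Subtype.ext ((leaves_of_mem _ _ hp1).symm.trans (leaves_of_mem _ _ hq1)))
end PTree
namespace PTree
lemma w_nonneg : ∀ t, 0 ≤ w t := by
  intro t
  induction t with
  | leaf => norm_num [w]
  | node l r hl hr =>
    rw [w]
    exact div_nonneg (mul_nonneg hl hr) (Nat.cast_nonneg _)

lemma one_le_c_of_mem (m : ℕ) (t : PTree) (ht : t ∈ trees (m+2)) : 1 ≤ c t := by
  rw [trees] at ht
  simp only [Finset.mem_biUnion, Finset.mem_image, Finset.mem_product,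
    Finset.mem_attach, true_and] at ht
  obtain ⟨j, p, _, rfl⟩ := ht
  rw [c]
  exact Nat.one_le_iff_ne_zero.mpr (by positivity)

lemma w_node_eq (m j : ℕ) (hj : j ∈ Finset.Icc 1 (m+1)) {l r : PTree}
    (hl : l ∈ trees j) (hr : r ∈ trees (m+2-j)) :
    w (node l r) = w l * w r / (m+1 : ℚ) := by
  have hj' := Finset.mem_Icc.mp hj
  rw [w, leaves_of_mem _ _ hl, leaves_of_mem _ _ hr]
  congr 1
  rw [show j + (m+2-j) - 1 = m+1 by omega]
  push_cast; ring

lemma sum_w : ∀ n, 1 ≤ n → ∑ t ∈ trees n, w t = 1 := by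
  intro n
  induction n using Nat.strong_induction_on with
  | _ n ih =>
    match n with
    | 0 => intro h; omega
    | 1 => intro _; simp [trees, w]
    | (m+2) =>
      intro _
      rw [sum_trees]
      have : ∀ j ∈ Finset.Icc 1 (m+1),
          ∑ l ∈ trees j, ∑ r ∈ trees (m+2-j), w (node l r) = 1/(m+1 : ℚ) := by
        intro j hj
        have hj' := Finset.mem_Icc.mp hj
        calc ∑ l ∈ trees j, ∑ r ∈ trees (m+2-j), w (node l r)
            = ∑ l ∈ trees j, ∑ r ∈ trees (m+2-j), w l * w r / (m+1 : ℚ) := by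
              refine Finset.sum_congr rfl fun l hl => Finset.sum_congr rfl fun r hr => ?_
              exact w_node_eq m j hj hl hr
          _ = (∑ l ∈ trees j, w l) * (∑ r ∈ trees (m+2-j), w r) / (m+1 : ℚ) := by
              rw [Finset.sum_mul_sum, Finset.sum_div]
              exact Finset.sum_congr rfl fun l _ => by rw [Finset.sum_div]
          _ = 1/(m+1 : ℚ) := by
              rw [ih j (by omega) (by omega), ih (m+2-j) (by omega) (by omega)]
              ring
      rw [Finset.sum_congr rfl this, Finset.sum_const, Nat.card_Icc]
      have : ((m:ℚ)+1) ≠ 0 := by positivity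
      rw [show m + 1 + 1 - 1 = m + 1 by omega, nsmul_eq_mul]; push_cast
      field_simp
end PTree
namespace PTree
def H (n : ℕ) : ℚ := ∑ t ∈ trees n, w t / (c t + 1)

lemma H_one : H 1 = 1 := by simp [H, trees, w, c]

lemma H_nonneg (n : ℕ) : 0 ≤ H n :=
  Finset.sum_nonneg fun t _ => div_nonneg (w_nonneg t) (by positivity)

lemma H_le_half (m : ℕ) : H (m+2) ≤ 1/2 := by
  have : H (m+2) ≤ ∑ t ∈ trees (m+2), w t / 2 := by
    refine Finset.sum_le_sum fun t ht => ?_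
    refine div_le_div_of_nonneg_left (w_nonneg t) (by norm_num) ?_
    have := one_le_c_of_mem m t ht
    have : (1:ℚ) ≤ (c t : ℚ) := by exact_mod_cast this
    linarith
  rw [← Finset.sum_div, sum_w (m+2) (by omega)] at this
  linarith

/-- Recursion: mean of `1/c` over trees with `m+2` leaves. -/
lemma G_rec (m : ℕ) :
    ∑ t ∈ trees (m+2), w t / c t
      = (∑ j ∈ Finset.Icc 1 (m+1), H j * H (m+2-j)) / (m+1 : ℚ) := by
  rw [sum_trees (fun t => w t / c t) m]
  rw [Finset.sum_div]
  refine Finset.sum_congr rfl fun j hj => ?_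
  have hj' := Finset.mem_Icc.mp hj
  calc ∑ l ∈ trees j, ∑ r ∈ trees (m+2-j), w (node l r) / c (node l r)
      = ∑ l ∈ trees j, ∑ r ∈ trees (m+2-j),
          (w l / (c l + 1)) * (w r / (c r + 1)) / (m+1 : ℚ) := by
        refine Finset.sum_congr rfl fun l hl => Finset.sum_congr rfl fun r hr => ?_
        rw [w_node_eq m j hj hl hr, c]
        push_cast
        have h1 : ((c l : ℚ) + 1) ≠ 0 := by positivity
        have h2 : ((c r : ℚ) + 1) ≠ 0 := by positivity
        have h3 : ((m:ℚ) + 1) ≠ 0 := by positivity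
        field_simp
        try ring_nf
        try tauto
    _ = (∑ l ∈ trees j, w l / (c l + 1)) * (∑ r ∈ trees (m+2-j), w r / (c r + 1)) / (m+1:ℚ) := by
        rw [Finset.sum_mul_sum, Finset.sum_div]
        exact Finset.sum_congr rfl fun l _ => by rw [Finset.sum_div]
    _ = H j * H (m+2-j) / (m+1:ℚ) := rfl

lemma H_le_G (m : ℕ) : H (m+2) ≤ ∑ t ∈ trees (m+2), w t / c t := by
  refine Finset.sum_le_sum fun t ht => ?_
  have h1 : (1:ℚ) ≤ (c t : ℚ) := by exact_mod_cast one_le_c_of_mem m t ht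
  exact div_le_div_of_nonneg_left (w_nonneg t) (by linarith) (by linarith)

lemma G_le_one (m : ℕ) : ∑ t ∈ trees (m+2), w t / c t ≤ 1 := by
  have h : ∑ t ∈ trees (m+2), w t / c t ≤ ∑ t ∈ trees (m+2), w t := by
    refine Finset.sum_le_sum fun t ht => ?_
    have h1 : (1:ℚ) ≤ (c t : ℚ) := by exact_mod_cast one_le_c_of_mem m t ht
    calc w t / (c t : ℚ) ≤ w t / 1 := div_le_div_of_nonneg_left (w_nonneg t) one_pos h1
      _ = w t := div_one _
  rw [sum_w (m+2) (by omega)] at h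
  exact h

lemma G_nonneg (n : ℕ) : 0 ≤ ∑ t ∈ trees n, w t / c t :=
  Finset.sum_nonneg fun t _ => div_nonneg (w_nonneg t) (Nat.cast_nonneg _)
end PTree
namespace PTree
lemma rec_bound (m : ℕ) (hm : 2 ≤ m)
    (ih : ∀ k, 2 ≤ k → k ≤ m+1 → H k ≤ 3/4 * (9/10:ℚ)^k) :
    (∑ j ∈ Finset.Icc 1 (m+1), H j * H (m+2-j)) ≤ (m+1) * (3/4 * (9/10:ℚ)^(m+2)) := by
  have hset : Finset.Icc 1 (m+1) = insert 1 (insert (m+1) (Finset.Icc 2 m)) := by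
    ext x; simp only [Finset.mem_Icc, Finset.mem_insert]; omega
  have h1 : (1:ℕ) ∉ insert (m+1) (Finset.Icc 2 m) := by
    simp only [Finset.mem_insert, Finset.mem_Icc]; omega
  have h2 : m+1 ∉ Finset.Icc 2 m := by simp only [Finset.mem_Icc]; omega
  rw [hset, Finset.sum_insert h1, Finset.sum_insert h2]
  have hHm1 : H (m+1) ≤ 3/4 * (9/10:ℚ)^(m+1) := ih (m+1) (by omega) le_rfl
  have e1 : H 1 * H (m+2-1) = H (m+1) := by
    rw [show m+2-1 = m+1 by omega, H_one, one_mul]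
  have e2 : H (m+1) * H (m+2-(m+1)) = H (m+1) := by
    rw [show m+2-(m+1) = 1 by omega, H_one, mul_one]
  have hmid : ∑ j ∈ Finset.Icc 2 m, H j * H (m+2-j)
      ≤ ∑ j ∈ Finset.Icc 2 m, (9/16) * (9/10:ℚ)^(m+2) := by
    refine Finset.sum_le_sum fun j hj => ?_
    have hj' := Finset.mem_Icc.mp hj
    have ha := ih j hj'.1 (by omega)
    have hb := ih (m+2-j) (by omega) (by omega)
    calc H j * H (m+2-j) ≤ (3/4 * (9/10:ℚ)^j) * (3/4 * (9/10:ℚ)^(m+2-j)) :=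
          mul_le_mul ha hb (H_nonneg _) (by positivity)
      _ = (9/16) * ((9/10:ℚ)^(j + (m+2-j))) := by rw [pow_add]; ring
      _ = (9/16) * (9/10:ℚ)^(m+2) := by rw [show j + (m+2-j) = m+2 by omega]
  rw [Finset.sum_const, Nat.card_Icc, nsmul_eq_mul] at hmid
  have hcard : ((m + 1 - 2 : ℕ) : ℚ) = (m : ℚ) - 1 := by
    have : m + 1 - 2 = m - 1 := by omega
    rw [this]; push_cast [Nat.cast_sub (by omega : 1 ≤ m)]; ring
  rw [hcard] at hmid
  have hx : (0:ℚ) < (9/10:ℚ)^m := by positivity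
  have hm' : (2:ℚ) ≤ (m:ℚ) := by exact_mod_cast hm
  have hp1 : (9/10:ℚ)^(m+1) = (9/10:ℚ)^m * (9/10) := by rw [pow_succ]
  have hp2 : (9/10:ℚ)^(m+2) = (9/10:ℚ)^m * (81/100) := by
    rw [pow_add]; norm_num
  rw [e1, e2]
  nlinarith [hmid, hHm1, hx, hm']

lemma H_bound : ∀ n, 2 ≤ n → H n ≤ 3/4 * (9/10:ℚ)^n := by
  intro n
  induction n using Nat.strong_induction_on with
  | _ n ih =>
    match n with
    | 0 => intro h; omega
    | 1 => intro h; omega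
    | 2 => intro _; have := H_le_half 0; norm_num at this ⊢; linarith
    | 3 => intro _; have := H_le_half 1; norm_num at this ⊢; linarith
    | (m+4) =>
      intro _
      have hrec := rec_bound (m+2) (by omega) fun k hk hk' => ih k (by omega) hk
      have hG := (H_le_G (m+2)).trans_eq (G_rec (m+2))
      have hpos : (0:ℚ) < (m:ℚ) + 2 + 1 := by positivity
      calc H (m+4) = H ((m+2)+2) := by norm_num
        _ ≤ (∑ j ∈ Finset.Icc 1 (m+3), H j * H ((m+2)+2-j)) / ((m+2:ℕ)+1 : ℚ) := hG
        _ ≤ 3/4 * (9/10:ℚ)^(m+4) := by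
            rw [div_le_iff₀ (by push_cast; linarith)]
            push_cast
            calc (∑ j ∈ Finset.Icc 1 (m+3), H j * H ((m+2)+2-j))
                ≤ ((m+2:ℕ)+1 : ℚ) * (3/4 * (9/10:ℚ)^((m+2)+2)) := by
                  have := hrec
                  push_cast at this ⊢
                  convert this using 2 <;> norm_num
              _ = 3/4 * (9/10:ℚ)^(m+4) * ((m:ℚ)+2+1) := by push_cast; ring
end PTree
namespace PTree
lemma G_bound : ∀ n, 2 ≤ n → ∑ t ∈ trees n, w t / c t ≤ 2 * (9/10:ℚ)^n := by
  intro n hn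
  match n, hn with
  | 2, _ => have := G_le_one 0; norm_num at this ⊢; linarith
  | 3, _ => have := G_le_one 1; norm_num at this ⊢; linarith
  | (m+4), _ =>
    have hrec := rec_bound (m+2) (by omega) fun k hk hk' => H_bound k hk
    have hG := G_rec (m+2)
    have hpow : (0:ℚ) ≤ (9/10:ℚ)^(m+4) := by positivity
    calc ∑ t ∈ trees (m+4), w t / c t = ∑ t ∈ trees ((m+2)+2), w t / c t := by norm_num
      _ = (∑ j ∈ Finset.Icc 1 (m+3), H j * H ((m+2)+2-j)) / ((m+2:ℕ)+1 : ℚ) := hG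
      _ ≤ 3/4 * (9/10:ℚ)^(m+4) := by
          rw [div_le_iff₀ (by push_cast; positivity)]
          calc (∑ j ∈ Finset.Icc 1 (m+3), H j * H ((m+2)+2-j))
              ≤ ((m+2:ℕ)+1 : ℚ) * (3/4 * (9/10:ℚ)^((m+2)+2)) := by
                convert hrec using 2 <;> norm_num
            _ = 3/4 * (9/10:ℚ)^(m+4) * (((m+2:ℕ):ℚ)+1) := by push_cast; ring
      _ ≤ 2 * (9/10:ℚ)^(m+4) := by linarith
end PTree

/-- The Yule–Harding mean of the toll function `log(1 + 1/c_r)` decays to `0`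
exponentially fast, at rate `O(0.9^n)`. -/
theorem toll_mean_exponential_decay :
    ∃ C : ℝ, 0 < C ∧ ∀ n : ℕ, 2 ≤ n →
      ∑ t ∈ PTree.trees n, (PTree.w t : ℝ) * Real.log (1 + 1 / (PTree.c t : ℝ)) ≤
        C * (9 / 10 : ℝ) ^ n := by
  refine ⟨2, by norm_num, fun n hn => ?_⟩
  obtain ⟨m, rfl⟩ : ∃ m, n = m + 2 := ⟨n - 2, by omega⟩
  have step1 : ∑ t ∈ PTree.trees (m+2), (PTree.w t : ℝ) * Real.log (1 + 1 / (PTree.c t : ℝ))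
      ≤ ∑ t ∈ PTree.trees (m+2), (PTree.w t : ℝ) * (1 / (PTree.c t : ℝ)) := by
    refine Finset.sum_le_sum fun t ht => ?_
    have hw : (0:ℝ) ≤ (PTree.w t : ℝ) := by exact_mod_cast PTree.w_nonneg t
    have hc : (1:ℝ) ≤ (PTree.c t : ℝ) := by exact_mod_cast PTree.one_le_c_of_mem m t ht
    refine mul_le_mul_of_nonneg_left ?_ hw
    have hlog := Real.log_le_sub_one_of_pos (show (0:ℝ) < 1 + 1 / (PTree.c t : ℝ) by positivity)
    linarith
  have step2 : ∑ t ∈ PTree.trees (m+2), (PTree.w t : ℝ) * (1 / (PTree.c t : ℝ))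
      = ((∑ t ∈ PTree.trees (m+2), PTree.w t / PTree.c t : ℚ) : ℝ) := by
    push_cast
    refine Finset.sum_congr rfl fun t _ => ?_
    ring
  have step3 : ((∑ t ∈ PTree.trees (m+2), PTree.w t / PTree.c t : ℚ) : ℝ)
      ≤ ((2 * (9/10:ℚ)^(m+2) : ℚ) : ℝ) := by
    exact_mod_cast PTree.G_bound (m+2) (by omega)
  calc ∑ t ∈ PTree.trees (m+2), (PTree.w t : ℝ) * Real.log (1 + 1 / (PTree.c t : ℝ))
      ≤ ((2 * (9/10:ℚ)^(m+2) : ℚ) : ℝ) := by rw [← step2] at step3; linarith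
    _ = 2 * (9/10:ℝ)^(m+2) := by push_cast; norm_num
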